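/- Let T be a finite rooted tree whose internal vertices form a path (a caterpillar), with each leaf and the root assigned one of two colors (straight/dotted), and consider all colorings of the internal (spine) edges subject to the constraint that no vertex has all incoming edges of one color and outgoing edge of the other color. Order such colorings by: C ≤ C' iff C' is obtained from C by changing some dotted internal edges to straight. Then this poset has a unique maximal element, given by greedily coloring internal edges straight whenever admissible. -/

import Mathlib

/- Model of a caterpillar tree with `k` internal vertices on the spine
(vertex `0` is adjacent to the root edge, vertex `i+1` sits above vertex `i`),
root-edge color `r`, and lists `L i` of leaf colors at each vertex
(`true` = straight, `false` = dotted). A spine-edge coloring is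
`c : Fin (k-1) → Bool`, where edge `j` joins vertex `j` (below) to `j+1` (above). -/

/-- Output color of vertex `i` under spine coloring `c`. -/
def spineOut (k : ℕ) (r : Bool) (c : Fin (k - 1) → Bool) (i : Fin k) : Bool :=
  if h : (i : ℕ) = 0 then r
  else c ⟨(i : ℕ) - 1, by omega⟩

/-- List of colors of incoming edges of vertex `i`: its leaves together with the spine
edge above it (if any). -/
def spineIncoming (k : ℕ) (L : Fin k → List Bool) (c : Fin (k - 1) → Bool)
    (i : Fin k) : List Bool :=
  L i ++ (if h : (i : ℕ) + 1 < k then [c ⟨(i : ℕ), by omega⟩] else [])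

/-- Admissibility: no vertex has all incoming edges of one color while its outgoing edge
has the other color. -/
def SpineAdmissible (k : ℕ) (r : Bool) (L : Fin k → List Bool)
    (c : Fin (k - 1) → Bool) : Prop :=
  ∀ i : Fin k,
    ¬ ((∀ b ∈ spineIncoming k L c i, b = true) ∧ spineOut k r c i = false) ∧
    ¬ ((∀ b ∈ spineIncoming k L c i, b = false) ∧ spineOut k r c i = true)

/-- On a caterpillar, the poset of admissible spine-edge colorings (ordered by
recoloring dotted internal edges to straight, i.e. pointwise with dotted < straight)
has a unique maximal element, which dominates every admissible coloring. -/
theorem caterpillar_unique_sup (k : ℕ) (hk : 1 ≤ k) (r : Bool)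
    (L : Fin k → List Bool) (hne : ∃ c, SpineAdmissible k r L c) :
    ∃! cmax : Fin (k - 1) → Bool,
      SpineAdmissible k r L cmax ∧
      ∀ c : Fin (k - 1) → Bool, SpineAdmissible k r L c →
        ∀ j, c j = true → cmax j = true := by
  classical
  obtain ⟨c0, hc0⟩ := hne
  set cmax : Fin (k - 1) → Bool :=
    fun j => decide (∃ c, SpineAdmissible k r L c ∧ c j = true) with hcmax
  have hmem : ∀ j, cmax j = true ↔ ∃ c, SpineAdmissible k r L c ∧ c j = true := by
    intro j; simp [hcmax]
  have hadm : SpineAdmissible k r L cmax := by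
    intro i
    constructor
    · rintro ⟨hin, hout⟩
      by_cases hlt : (i : ℕ) + 1 < k
      · have hedge : cmax ⟨(i : ℕ), by omega⟩ = true := by
          apply hin
          simp [spineIncoming, hlt]
        obtain ⟨c, hc, hcj⟩ := (hmem _).1 hedge
        refine (hc i).1 ⟨?_, ?_⟩
        · intro b hb
          simp only [spineIncoming, dif_pos hlt, List.mem_append,
            List.mem_singleton] at hb
          rcases hb with hb | hb
          · exact hin b (by simp [spineIncoming, dif_pos hlt, hb])
          · rw [hb]; exact hcj
        · by_cases h0 : (i : ℕ) = 0
          · simp only [spineOut, dif_pos h0] at hout ⊢; exact hout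
          · simp only [spineOut, dif_neg h0] at hout ⊢
            cases hcc : c ⟨(i : ℕ) - 1, by omega⟩ with
            | true =>
              have : cmax ⟨(i : ℕ) - 1, by omega⟩ = true :=
                (hmem _).2 ⟨c, hc, hcc⟩
              rw [this] at hout; exact absurd hout (by simp)
            | false => rfl
      · refine (hc0 i).1 ⟨?_, ?_⟩
        · intro b hb
          simp only [spineIncoming, dif_neg hlt, List.append_nil] at hb
          exact hin b (by simp [spineIncoming, dif_neg hlt, hb])
        · by_cases h0 : (i : ℕ) = 0
          · simp only [spineOut, dif_pos h0] at hout ⊢; exact hout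
          · simp only [spineOut, dif_neg h0] at hout ⊢
            cases hcc : c0 ⟨(i : ℕ) - 1, by omega⟩ with
            | true =>
              have : cmax ⟨(i : ℕ) - 1, by omega⟩ = true :=
                (hmem _).2 ⟨c0, hc0, hcc⟩
              rw [this] at hout; exact absurd hout (by simp)
            | false => rfl
    · rintro ⟨hin, hout⟩
      -- get a witness `c` with out color true at `i`
      obtain ⟨c, hc, hcout⟩ :
          ∃ c, SpineAdmissible k r L c ∧ spineOut k r c i = true := by
        by_cases h0 : (i : ℕ) = 0
        · refine ⟨c0, hc0, ?_⟩
          simp only [spineOut, dif_pos h0] at hout ⊢; exact hout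
        · simp only [spineOut, dif_neg h0] at hout
          obtain ⟨c, hc, hcj⟩ := (hmem _).1 hout
          exact ⟨c, hc, by simp only [spineOut, dif_neg h0]; exact hcj⟩
      refine (hc i).2 ⟨?_, hcout⟩
      intro b hb
      by_cases hlt : (i : ℕ) + 1 < k
      · simp only [spineIncoming, dif_pos hlt, List.mem_append,
          List.mem_singleton] at hb
        rcases hb with hb | hb
        · exact hin b (by simp [spineIncoming, dif_pos hlt, hb])
        · rw [hb]
          have hcm : cmax ⟨(i : ℕ), by omega⟩ = false :=
            hin _ (by simp [spineIncoming, dif_pos hlt])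
          cases hcc : c ⟨(i : ℕ), by omega⟩ with
          | true =>
            have : cmax ⟨(i : ℕ), by omega⟩ = true := (hmem _).2 ⟨c, hc, hcc⟩
            rw [this] at hcm; exact absurd hcm (by simp)
          | false => rfl
      · simp only [spineIncoming, dif_neg hlt, List.append_nil] at hb
        exact hin b (by simp [spineIncoming, dif_neg hlt, hb])
  refine ⟨cmax, ⟨hadm, ?_⟩, ?_⟩
  · intro c hc j hj
    exact (hmem j).2 ⟨c, hc, hj⟩
  · rintro d ⟨hd, hdom⟩
    funext j
    have h1 := hdom cmax hadm j
    have h2 : d j = true → cmax j = true := fun h => (hmem j).2 ⟨d, hd, h⟩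
    cases hdj : d j <;> cases hcj : cmax j
    · rfl
    · exact absurd (h1 hcj) (by simp [hdj])
    · exact absurd (h2 hdj) (by simp [hcj])
    · rfl
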